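/- (Richards-type decision tree inequality.) Let E be a finite set. In the generalized decision-tree model, take Ω₁(e)=Ω₂(e)={0,1}³, with μ₁(e) the mixture (2/3)·(uniform measure on {000,111}) + (1/3)·(uniform measure on {0,1}³), and μ₂(e) the mixture (1/3)·(uniform on {000,011,100,111}) + (1/3)·(uniform on {000,010,101,111}) + (1/3)·(uniform on {000,001,110,111}). For closed-upward events U,V,W ⊆ {0,1}^E, let U×V×W denote the event that the configuration of first coordinates of C lies in U, the configuration of second coordinates lies in V, and the configuration of third coordinates lies in W. Then for every generating decision tree T with random output configuration C, P(C₁∈U×V×W) ≥ P(C∈U×V×W) ≥ P(C₂∈U×V×W), where C₁ has distribution Π_e μ₁(e) and C₂ has distribution Π_e μ₂(e). -/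
import Mathlib


namespace GenDT

/-- A generating decision tree: every node queries an edge and either samples its value
from the first probability space (`node1`) or the second one (`node2`), with one child
for each possible sampled value. -/
inductive GTree (E : Type u) (Ω₁ : E → Type v) (Ω₂ : E → Type w) : Type (max u v w)
  | leaf : GTree E Ω₁ Ω₂
  | node1 (e : E) (child : Ω₁ e → GTree E Ω₁ Ω₂) : GTree E Ω₁ Ω₂
  | node2 (e : E) (child : Ω₂ e → GTree E Ω₁ Ω₂) : GTree E Ω₁ Ω₂

variable {E : Type*} [Fintype E] [DecidableEq E] {Ω₁ : E → Type*} {Ω₂ : E → Type*}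
  [∀ e, Fintype (Ω₁ e)] [∀ e, Fintype (Ω₂ e)]

/-- Along each root-to-leaf path, every edge of `rem` is queried exactly once. -/
def GTree.complete : GTree E Ω₁ Ω₂ → Finset E → Prop
  | .leaf, rem => rem = ∅
  | .node1 e child, rem => e ∈ rem ∧ ∀ x, (child x).complete (rem.erase e)
  | .node2 e child, rem => e ∈ rem ∧ ∀ x, (child x).complete (rem.erase e)

/-- The probability that the run of the tree outputs exactly the configuration `C`,
when values at `node1`/`node2` nodes are sampled independently with mass functions
`m₁`/`m₂`. -/
def GTree.mass (m₁ : ∀ e, Ω₁ e → ℝ) (m₂ : ∀ e, Ω₂ e → ℝ) :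
    GTree E Ω₁ Ω₂ → (∀ e, Ω₁ e ⊕ Ω₂ e) → ℝ
  | .leaf, _ => 1
  | .node1 e child, C =>
      match C e with
      | .inl x => m₁ e x * (child x).mass m₁ m₂ C
      | .inr _ => 0
  | .node2 e child, C =>
      match C e with
      | .inl _ => 0
      | .inr x => m₂ e x * (child x).mass m₁ m₂ C

/-- Mass function of `C₁`, the configuration sampled entirely from the first spaces. -/
def mass1 (m₁ : ∀ e, Ω₁ e → ℝ) (C : ∀ e, Ω₁ e ⊕ Ω₂ e) : ℝ :=
  ∏ e, match C e with
       | .inl x => m₁ e x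
       | .inr _ => 0

/-- Mass function of `C₂`, the configuration sampled entirely from the second spaces. -/
def mass2 (m₂ : ∀ e, Ω₂ e → ℝ) (C : ∀ e, Ω₁ e ⊕ Ω₂ e) : ℝ :=
  ∏ e, match C e with
       | .inl _ => 0
       | .inr x => m₂ e x

/-- Probability of an event under a mass function on a finite configuration space. -/
noncomputable def PrOf {Ω : Type*} [Fintype Ω] (mass : Ω → ℝ) (A : Set Ω) : ℝ :=
  ∑ x : Ω, A.indicator mass x

/-- An event of configurations in `{0,1}^E` is closed upward if it is preserved by
turning more coordinates to `true`. -/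
def UpwardClosed (A : Set (E → Bool)) : Prop :=
  ∀ C₁ C₂ : E → Bool, C₁ ∈ A → (∀ e, C₁ e = true → C₂ e = true) → C₂ ∈ A

/-- Triples of bits. -/
abbrev B3 : Type := Bool × Bool × Bool

/-- The triple of bits carried by a value of `Ω₁(e) ⊔ Ω₂(e)` (here `Ω₁ = Ω₂ = {0,1}³`). -/
def bits : B3 ⊕ B3 → B3
  | .inl x => x
  | .inr x => x

/-- `μ₁(e)`: the mixture `(2/3)·Unif{000,111} + (1/3)·Unif({0,1}³)`. -/
noncomputable def massR₁ : (e : E) → B3 → ℝ := fun _ x =>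
  (2 / 3) * (if x = (false, false, false) ∨ x = (true, true, true) then 1 / 2 else 0)
    + (1 / 3) * (1 / 8)

/-- `μ₂(e)`: the mixture `(1/3)·Unif{000,011,100,111} + (1/3)·Unif{000,010,101,111}
+ (1/3)·Unif{000,001,110,111}`. -/
noncomputable def massR₂ : (e : E) → B3 → ℝ := fun _ x =>
  (1 / 3) * (if x = (false, false, false) ∨ x = (false, true, true) ∨
               x = (true, false, false) ∨ x = (true, true, true) then 1 / 4 else 0)
    + (1 / 3) * (if x = (false, false, false) ∨ x = (false, true, false) ∨
               x = (true, false, true) ∨ x = (true, true, true) then 1 / 4 else 0)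
    + (1 / 3) * (if x = (false, false, false) ∨ x = (false, false, true) ∨
               x = (true, true, false) ∨ x = (true, true, true) then 1 / 4 else 0)

/-- The event `U × V × W`: the configurations of first, second and third coordinates
lie in `U`, `V` and `W` respectively. -/
def CoordEvent₃ (U V W : Set (E → Bool)) : Set (E → B3 ⊕ B3) :=
  {C | (fun e => (bits (C e)).1) ∈ U ∧ (fun e => (bits (C e)).2.1) ∈ V ∧
       (fun e => (bits (C e)).2.2) ∈ W}

/-! ### Auxiliary machinery -/

noncomputable def r₁ : B3 → ℝ := fun x =>
  (2 / 3) * (if x = (false, false, false) ∨ x = (true, true, true) then 1 / 2 else 0)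
    + (1 / 3) * (1 / 8)

noncomputable def r₂ : B3 → ℝ := fun x =>
  (1 / 3) * (if x = (false, false, false) ∨ x = (false, true, true) ∨
               x = (true, false, false) ∨ x = (true, true, true) then 1 / 4 else 0)
    + (1 / 3) * (if x = (false, false, false) ∨ x = (false, true, false) ∨
               x = (true, false, true) ∨ x = (true, true, true) then 1 / 4 else 0)
    + (1 / 3) * (if x = (false, false, false) ∨ x = (false, false, true) ∨
               x = (true, true, false) ∨ x = (true, true, true) then 1 / 4 else 0)

lemma r₁_nonneg (x : B3) : 0 ≤ r₁ x := by unfold r₁; split_ifs <;> norm_num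
lemma r₂_nonneg (x : B3) : 0 ≤ r₂ x := by unfold r₂; split_ifs <;> norm_num

lemma massR₁_eq (e : E) (x : B3) : massR₁ e x = r₁ x := rfl
lemma massR₂_eq (e : E) (x : B3) : massR₂ e x = r₂ x := rfl

noncomputable def m1v : B3 ⊕ B3 → ℝ
  | .inl x => r₁ x
  | .inr _ => 0

noncomputable def m2v : B3 ⊕ B3 → ℝ
  | .inl _ => 0
  | .inr x => r₂ x

lemma m1v_nonneg : ∀ w, 0 ≤ m1v w
  | .inl x => r₁_nonneg x
  | .inr _ => le_refl 0

lemma m2v_nonneg : ∀ w, 0 ≤ m2v w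
  | .inl _ => le_refl 0
  | .inr x => r₂_nonneg x

noncomputable def pM (m : B3 ⊕ B3 → ℝ) (rem : Finset E) (C : E → B3 ⊕ B3) : ℝ :=
  ∏ e ∈ rem, m (C e)

lemma pM_nonneg (m : B3 ⊕ B3 → ℝ) (hm : ∀ w, 0 ≤ m w) (rem : Finset E)
    (C : E → B3 ⊕ B3) : 0 ≤ pM m rem C :=
  Finset.prod_nonneg fun j _ => hm (C j)

lemma pM_update {rem : Finset E} {e : E} (he : e ∉ rem) (m : B3 ⊕ B3 → ℝ)
    (C : E → B3 ⊕ B3) (v : B3 ⊕ B3) : pM m rem (Function.update C e v) = pM m rem C :=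
  Finset.prod_congr rfl fun j hj => by
    have hne : j ≠ e := fun h => by subst h; exact he hj
    rw [Function.update_of_ne hne v C]

noncomputable def Val (M f : (E → B3 ⊕ B3) → ℝ) : ℝ := ∑ C : E → B3 ⊕ B3, M C * f C

open Classical in
noncomputable def ind (p : Prop) : ℝ := if p then 1 else 0

lemma ind_nonneg (p : Prop) : 0 ≤ ind p := by
  unfold ind; split_ifs <;> norm_num

lemma ind_mono {p q : Prop} (h : p → q) : ind p ≤ ind q := by
  by_cases hp : p
  · have hq := h hp; simp [ind, hp, hq]
  · simp only [ind]; rw [if_neg hp]; exact ind_nonneg q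

noncomputable def F (U V W : Set (E → Bool)) (C : E → B3 ⊕ B3) : ℝ :=
  ind ((fun e => (bits (C e)).1) ∈ U) *
    (ind ((fun e => (bits (C e)).2.1) ∈ V) * ind ((fun e => (bits (C e)).2.2) ∈ W))

def Upd (A : Set (E → Bool)) (e : E) (b : Bool) : Set (E → Bool) :=
  {c | Function.update c e b ∈ A}

lemma Upd_upwardClosed {A : Set (E → Bool)} (hA : UpwardClosed A) (e : E) (b : Bool) :
    UpwardClosed (Upd A e b) := by
  intro c₁ c₂ h₁ hle
  refine hA _ _ h₁ fun j hj => ?_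
  by_cases hje : j = e
  · subst hje; simp only [Function.update_self] at hj ⊢; exact hj
  · rw [Function.update_of_ne hje] at hj ⊢
    exact hle j hj

lemma Upd_subset {A : Set (E → Bool)} (hA : UpwardClosed A) (e : E) :
    Upd A e false ⊆ Upd A e true := by
  intro c hc
  refine hA _ _ hc fun j hj => ?_
  by_cases hje : j = e
  · subst hje; simp
  · rw [Function.update_of_ne hje] at hj ⊢
    exact hj


lemma mass_node1_inl {m₁ : ∀ e, Ω₁ e → ℝ} {m₂ : ∀ e, Ω₂ e → ℝ} {e : E}
    {child : Ω₁ e → GTree E Ω₁ Ω₂} {C : ∀ e, Ω₁ e ⊕ Ω₂ e} {x : Ω₁ e}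
    (hc : C e = .inl x) :
    (GTree.node1 e child).mass m₁ m₂ C = m₁ e x * (child x).mass m₁ m₂ C := by
  simp only [GTree.mass]
  rw [hc]

lemma mass_node1_inr {m₁ : ∀ e, Ω₁ e → ℝ} {m₂ : ∀ e, Ω₂ e → ℝ} {e : E}
    {child : Ω₁ e → GTree E Ω₁ Ω₂} {C : ∀ e, Ω₁ e ⊕ Ω₂ e} {x : Ω₂ e}
    (hc : C e = .inr x) :
    (GTree.node1 e child).mass m₁ m₂ C = 0 := by
  simp only [GTree.mass]
  rw [hc]

lemma mass_node2_inl {m₁ : ∀ e, Ω₁ e → ℝ} {m₂ : ∀ e, Ω₂ e → ℝ} {e : E}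
    {child : Ω₂ e → GTree E Ω₁ Ω₂} {C : ∀ e, Ω₁ e ⊕ Ω₂ e} {x : Ω₁ e}
    (hc : C e = .inl x) :
    (GTree.node2 e child).mass m₁ m₂ C = 0 := by
  simp only [GTree.mass]
  rw [hc]

lemma mass_node2_inr {m₁ : ∀ e, Ω₁ e → ℝ} {m₂ : ∀ e, Ω₂ e → ℝ} {e : E}
    {child : Ω₂ e → GTree E Ω₁ Ω₂} {C : ∀ e, Ω₁ e ⊕ Ω₂ e} {x : Ω₂ e}
    (hc : C e = .inr x) :
    (GTree.node2 e child).mass m₁ m₂ C = m₂ e x * (child x).mass m₁ m₂ C := by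
  simp only [GTree.mass]
  rw [hc]

lemma gmass_nonneg (T : GTree E (fun _ => B3) (fun _ => B3)) (C : E → B3 ⊕ B3) :
    0 ≤ T.mass massR₁ massR₂ C := by
  induction T with
  | leaf => exact zero_le_one
  | node1 e child ih =>
      cases hc : C e with
      | inl x => rw [mass_node1_inl hc]; exact mul_nonneg (r₁_nonneg x) (ih x)
      | inr x => rw [mass_node1_inr hc]
  | node2 e child ih =>
      cases hc : C e with
      | inl x => rw [mass_node2_inl hc]
      | inr x => rw [mass_node2_inr hc]; exact mul_nonneg (r₂_nonneg x) (ih x)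

lemma gmass_update (T : GTree E (fun _ => B3) (fun _ => B3)) :
    ∀ rem : Finset E, T.complete rem → ∀ e ∉ rem, ∀ (C : E → B3 ⊕ B3) (v : B3 ⊕ B3),
      T.mass massR₁ massR₂ (Function.update C e v) = T.mass massR₁ massR₂ C := by
  induction T with
  | leaf => intro rem _ e _ C v; rfl
  | node1 e' child ih =>
      intro rem hT e he C v
      obtain ⟨he', hch⟩ := hT
      have hne : e' ≠ e := fun h => he (h ▸ he')
      have hu : Function.update C e v e' = C e' := Function.update_of_ne hne v C
      have hrem : e ∉ rem.erase e' := fun h => he (Finset.mem_of_mem_erase h)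
      cases hc : C e' with
      | inl x =>
          rw [mass_node1_inl (hu.trans hc), mass_node1_inl hc,
            ih x (rem.erase e') (hch x) e hrem C v]
      | inr x =>
          rw [mass_node1_inr (hu.trans hc), mass_node1_inr hc]
  | node2 e' child ih =>
      intro rem hT e he C v
      obtain ⟨he', hch⟩ := hT
      have hne : e' ≠ e := fun h => he (h ▸ he')
      have hu : Function.update C e v e' = C e' := Function.update_of_ne hne v C
      have hrem : e ∉ rem.erase e' := fun h => he (Finset.mem_of_mem_erase h)
      cases hc : C e' with
      | inl x =>
          rw [mass_node2_inl (hu.trans hc), mass_node2_inl hc]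
      | inr x =>
          rw [mass_node2_inr (hu.trans hc), mass_node2_inr hc,
            ih x (rem.erase e') (hch x) e hrem C v]

lemma card16 : (Finset.univ : Finset (B3 ⊕ B3)).card = 16 := by decide

lemma key_split (e : E) (H : (B3 ⊕ B3) → (E → B3 ⊕ B3) → ℝ) :
    16 * ∑ C : E → B3 ⊕ B3, H (C e) C
      = ∑ w : B3 ⊕ B3, ∑ C : E → B3 ⊕ B3, H w (Function.update C e w) := by
  classical
  have h1 : ∀ (w : B3 ⊕ B3) (D : {j : E // j ≠ e} → B3 ⊕ B3),
      (Equiv.funSplitAt e (B3 ⊕ B3)).symm (w, D) e = w := by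
    intro w D
    simp [Equiv.funSplitAt, Equiv.piSplitAt]
  have h2 : ∀ (w w' : B3 ⊕ B3) (D : {j : E // j ≠ e} → B3 ⊕ B3),
      Function.update ((Equiv.funSplitAt e (B3 ⊕ B3)).symm (w', D)) e w
        = (Equiv.funSplitAt e (B3 ⊕ B3)).symm (w, D) := by
    intro w w' D
    funext j
    rcases eq_or_ne j e with rfl | hj
    · simp [Equiv.funSplitAt, Equiv.piSplitAt]
    · simp [Function.update_of_ne hj, Equiv.funSplitAt, Equiv.piSplitAt, hj]
  have hsum : ∀ G : (E → B3 ⊕ B3) → ℝ,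
      ∑ C : E → B3 ⊕ B3, G C
        = ∑ w : B3 ⊕ B3, ∑ D : {j : E // j ≠ e} → B3 ⊕ B3,
            G ((Equiv.funSplitAt e (B3 ⊕ B3)).symm (w, D)) := by
    intro G
    rw [← Equiv.sum_comp (Equiv.funSplitAt e (B3 ⊕ B3)).symm G, Fintype.sum_prod_type]
  rw [hsum (fun C => H (C e) C), Finset.mul_sum]
  refine Finset.sum_congr rfl fun w _ => ?_
  rw [hsum (fun C => H w (Function.update C e w))]
  have hLrw : (∑ D : {j : E // j ≠ e} → B3 ⊕ B3,
        H ((Equiv.funSplitAt e (B3 ⊕ B3)).symm (w, D) e)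
          ((Equiv.funSplitAt e (B3 ⊕ B3)).symm (w, D)))
      = ∑ D : {j : E // j ≠ e} → B3 ⊕ B3,
          H w ((Equiv.funSplitAt e (B3 ⊕ B3)).symm (w, D)) :=
    Finset.sum_congr rfl fun D _ => by rw [h1]
  have hRrw : (∑ w' : B3 ⊕ B3, ∑ D : {j : E // j ≠ e} → B3 ⊕ B3,
        H w (Function.update ((Equiv.funSplitAt e (B3 ⊕ B3)).symm (w', D)) e w))
      = ∑ w' : B3 ⊕ B3, ∑ D : {j : E // j ≠ e} → B3 ⊕ B3,
          H w ((Equiv.funSplitAt e (B3 ⊕ B3)).symm (w, D)) :=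
    Finset.sum_congr rfl fun w' _ => Finset.sum_congr rfl fun D _ => by rw [h2]
  rw [hLrw, hRrw, Finset.sum_const, card16, nsmul_eq_mul]
  norm_num


lemma F_update (U V W : Set (E → Bool)) (e : E) (w : B3 ⊕ B3) (C : E → B3 ⊕ B3) :
    F U V W (Function.update C e w)
      = F (Upd U e (bits w).1) (Upd V e (bits w).2.1) (Upd W e (bits w).2.2) C := by
  have h1 : (fun j => (bits (Function.update C e w j)).1)
      = Function.update (fun j => (bits (C j)).1) e (bits w).1 := by
    funext j
    by_cases hj : j = e
    · subst hj; simp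
    · simp [Function.update_of_ne hj]
  have h2 : (fun j => (bits (Function.update C e w j)).2.1)
      = Function.update (fun j => (bits (C j)).2.1) e (bits w).2.1 := by
    funext j
    by_cases hj : j = e
    · subst hj; simp
    · simp [Function.update_of_ne hj]
  have h3 : (fun j => (bits (Function.update C e w j)).2.2)
      = Function.update (fun j => (bits (C j)).2.2) e (bits w).2.2 := by
    funext j
    by_cases hj : j = e
    · subst hj; simp
    · simp [Function.update_of_ne hj]
  simp only [F, h1, h2, h3, Upd, Set.mem_setOf_eq]

lemma six (u0 u1 v0 v1 w0 w1 : ℝ) (h0u : 0 ≤ u0) (hu : u0 ≤ u1)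
    (h0v : 0 ≤ v0) (hv : v0 ≤ v1) (h0w : 0 ≤ w0) (hw : w0 ≤ w1) (a b c : Bool) :
    (if a then u1 else u0) * ((if b then v1 else v0) * (if c then w1 else w0))
      + (if !a then u1 else u0) * ((if !b then v1 else v0) * (if !c then w1 else w0))
      ≤ u0 * (v0 * w0) + u1 * (v1 * w1) := by
  have hu1 : 0 ≤ u1 := le_trans h0u hu
  have hv1 : 0 ≤ v1 := le_trans h0v hv
  have hw1 : 0 ≤ w1 := le_trans h0w hw
  have q1 : v0 * w0 ≤ v1 * w1 := mul_le_mul hv hw h0w hv1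
  have q2 : u0 * w0 ≤ u1 * w1 := mul_le_mul hu hw h0w hu1
  have q3 : u0 * v0 ≤ u1 * v1 := mul_le_mul hu hv h0v hu1
  have p1 : 0 ≤ (u1 - u0) * (v1 * w1 - v0 * w0) :=
    mul_nonneg (by linarith) (by linarith)
  have p2 : 0 ≤ (v1 - v0) * (u1 * w1 - u0 * w0) :=
    mul_nonneg (by linarith) (by linarith)
  have p3 : 0 ≤ (w1 - w0) * (u1 * v1 - u0 * v0) :=
    mul_nonneg (by linarith) (by linarith)
  cases a <;> cases b <;> cases c <;> simp <;> nlinarith [p1, p2, p3]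

lemma F_pair {U V W : Set (E → Bool)} (hU : UpwardClosed U) (hV : UpwardClosed V)
    (hW : UpwardClosed W) (e : E) (a b c : Bool) (C : E → B3 ⊕ B3) :
    F (Upd U e a) (Upd V e b) (Upd W e c) C
      + F (Upd U e (!a)) (Upd V e (!b)) (Upd W e (!c)) C
      ≤ F (Upd U e false) (Upd V e false) (Upd W e false) C
        + F (Upd U e true) (Upd V e true) (Upd W e true) C := by
  have hrwU : ∀ t : Bool, ind ((fun j => (bits (C j)).1) ∈ Upd U e t)
      = if t then ind ((fun j => (bits (C j)).1) ∈ Upd U e true)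
        else ind ((fun j => (bits (C j)).1) ∈ Upd U e false) := by
    intro t; cases t <;> rfl
  have hrwV : ∀ t : Bool, ind ((fun j => (bits (C j)).2.1) ∈ Upd V e t)
      = if t then ind ((fun j => (bits (C j)).2.1) ∈ Upd V e true)
        else ind ((fun j => (bits (C j)).2.1) ∈ Upd V e false) := by
    intro t; cases t <;> rfl
  have hrwW : ∀ t : Bool, ind ((fun j => (bits (C j)).2.2) ∈ Upd W e t)
      = if t then ind ((fun j => (bits (C j)).2.2) ∈ Upd W e true)
        else ind ((fun j => (bits (C j)).2.2) ∈ Upd W e false) := by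
    intro t; cases t <;> rfl
  simp only [F]
  rw [hrwU a, hrwV b, hrwW c, hrwU (!a), hrwV (!b), hrwW (!c)]
  exact six _ _ _ _ _ _ (ind_nonneg _) (ind_mono fun h => Upd_subset hU e h)
    (ind_nonneg _) (ind_mono fun h => Upd_subset hV e h)
    (ind_nonneg _) (ind_mono fun h => Upd_subset hW e h) a b c

lemma val_pair (M : (E → B3 ⊕ B3) → ℝ) (hM : ∀ C, 0 ≤ M C)
    {U V W : Set (E → Bool)} (hU : UpwardClosed U) (hV : UpwardClosed V)
    (hW : UpwardClosed W) (e : E) (a b c : Bool) :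
    Val M (F (Upd U e a) (Upd V e b) (Upd W e c))
      + Val M (F (Upd U e (!a)) (Upd V e (!b)) (Upd W e (!c)))
      ≤ Val M (F (Upd U e false) (Upd V e false) (Upd W e false))
        + Val M (F (Upd U e true) (Upd V e true) (Upd W e true)) := by
  simp only [Val, ← Finset.sum_add_distrib]
  refine Finset.sum_le_sum fun C _ => ?_
  rw [← mul_add, ← mul_add]
  exact mul_le_mul_of_nonneg_left (F_pair hU hV hW e a b c C) (hM C)

lemma crux (g : B3 → ℝ)
    (h1 : g (true, false, false) + g (false, true, true)
        ≤ g (false, false, false) + g (true, true, true))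
    (h2 : g (false, true, false) + g (true, false, true)
        ≤ g (false, false, false) + g (true, true, true))
    (h3 : g (false, false, true) + g (true, true, false)
        ≤ g (false, false, false) + g (true, true, true)) :
    ∑ x : B3, r₂ x * g x ≤ ∑ x : B3, r₁ x * g x := by
  simp only [Fintype.sum_prod_type, Fintype.sum_bool, r₁, r₂]
  norm_num [Prod.ext_iff]
  linarith


lemma val_pM_step (m : B3 ⊕ B3 → ℝ) {rem : Finset E} {e : E} (he : e ∈ rem)
    (U V W : Set (E → Bool)) :
    16 * Val (pM m rem) (F U V W)
      = ∑ w : B3 ⊕ B3, m w * Val (pM m (rem.erase e))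
          (F (Upd U e (bits w).1) (Upd V e (bits w).2.1) (Upd W e (bits w).2.2)) := by
  have hstep := key_split e (fun w C => (m w * pM m (rem.erase e) C) * F U V W C)
  have hL : (∑ C : E → B3 ⊕ B3, (m (C e) * pM m (rem.erase e) C) * F U V W C)
      = Val (pM m rem) (F U V W) := by
    refine Finset.sum_congr rfl fun C _ => ?_
    have hp : pM m rem C = m (C e) * pM m (rem.erase e) C :=
      (Finset.mul_prod_erase rem (fun j => m (C j)) he).symm
    rw [hp]
  have hR : ∀ w : B3 ⊕ B3,
      (∑ C : E → B3 ⊕ B3,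
        (m w * pM m (rem.erase e) (Function.update C e w)) * F U V W (Function.update C e w))
        = m w * Val (pM m (rem.erase e))
            (F (Upd U e (bits w).1) (Upd V e (bits w).2.1) (Upd W e (bits w).2.2)) := by
    intro w
    rw [Val, Finset.mul_sum]
    refine Finset.sum_congr rfl fun C _ => ?_
    rw [pM_update (Finset.notMem_erase e rem) m C w, F_update]
    ring
  calc 16 * Val (pM m rem) (F U V W)
      = 16 * ∑ C : E → B3 ⊕ B3, (m (C e) * pM m (rem.erase e) C) * F U V W C := by
        rw [hL]
    _ = ∑ w : B3 ⊕ B3, ∑ C : E → B3 ⊕ B3,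
          (m w * pM m (rem.erase e) (Function.update C e w)) * F U V W (Function.update C e w) :=
        hstep
    _ = ∑ w : B3 ⊕ B3, m w * Val (pM m (rem.erase e))
          (F (Upd U e (bits w).1) (Upd V e (bits w).2.1) (Upd W e (bits w).2.2)) :=
        Finset.sum_congr rfl fun w _ => hR w

lemma val_node1_step (e : E) (child : B3 → GTree E (fun _ => B3) (fun _ => B3))
    (hind : ∀ (x : B3) (C : E → B3 ⊕ B3) (v : B3 ⊕ B3),
      (child x).mass massR₁ massR₂ (Function.update C e v)
        = (child x).mass massR₁ massR₂ C)
    (U V W : Set (E → Bool)) :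
    16 * Val ((GTree.node1 e child).mass massR₁ massR₂) (F U V W)
      = ∑ x : B3, r₁ x * Val ((child x).mass massR₁ massR₂)
          (F (Upd U e x.1) (Upd V e x.2.1) (Upd W e x.2.2)) := by
  have hstep := key_split e (fun w C =>
    (Sum.elim (fun x => massR₁ e x * (child x).mass massR₁ massR₂ C) (fun _ => (0:ℝ)) w)
      * F U V W C)
  have hL : (∑ C : E → B3 ⊕ B3,
      (Sum.elim (fun x => massR₁ e x * (child x).mass massR₁ massR₂ C) (fun _ => (0:ℝ)) (C e))
        * F U V W C)
      = Val ((GTree.node1 e child).mass massR₁ massR₂) (F U V W) := by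
    refine Finset.sum_congr rfl fun C _ => ?_
    cases hc : C e with
    | inl x => rw [mass_node1_inl hc]; simp only [Sum.elim_inl]
    | inr x => rw [mass_node1_inr hc]; simp only [Sum.elim_inr]
  rw [← hL, hstep, Fintype.sum_sum_type]
  simp only [Sum.elim_inl, Sum.elim_inr, zero_mul, Finset.sum_const_zero, add_zero]
  refine Finset.sum_congr rfl fun x _ => ?_
  rw [Val, Finset.mul_sum]
  refine Finset.sum_congr rfl fun C _ => ?_
  rw [hind x C (.inl x), F_update, massR₁_eq]
  simp only [bits]
  ring

lemma val_node2_step (e : E) (child : B3 → GTree E (fun _ => B3) (fun _ => B3))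
    (hind : ∀ (x : B3) (C : E → B3 ⊕ B3) (v : B3 ⊕ B3),
      (child x).mass massR₁ massR₂ (Function.update C e v)
        = (child x).mass massR₁ massR₂ C)
    (U V W : Set (E → Bool)) :
    16 * Val ((GTree.node2 e child).mass massR₁ massR₂) (F U V W)
      = ∑ x : B3, r₂ x * Val ((child x).mass massR₁ massR₂)
          (F (Upd U e x.1) (Upd V e x.2.1) (Upd W e x.2.2)) := by
  have hstep := key_split e (fun w C =>
    (Sum.elim (fun _ => (0:ℝ)) (fun x => massR₂ e x * (child x).mass massR₁ massR₂ C) w)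
      * F U V W C)
  have hL : (∑ C : E → B3 ⊕ B3,
      (Sum.elim (fun _ => (0:ℝ)) (fun x => massR₂ e x * (child x).mass massR₁ massR₂ C) (C e))
        * F U V W C)
      = Val ((GTree.node2 e child).mass massR₁ massR₂) (F U V W) := by
    refine Finset.sum_congr rfl fun C _ => ?_
    cases hc : C e with
    | inl x => rw [mass_node2_inl hc]; simp only [Sum.elim_inl]
    | inr x => rw [mass_node2_inr hc]; simp only [Sum.elim_inr]
  rw [← hL, hstep, Fintype.sum_sum_type]
  simp only [Sum.elim_inl, Sum.elim_inr, zero_mul, Finset.sum_const_zero, zero_add]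
  refine Finset.sum_congr rfl fun x _ => ?_
  rw [Val, Finset.mul_sum]
  refine Finset.sum_congr rfl fun C _ => ?_
  rw [hind x C (.inr x), F_update, massR₂_eq]
  simp only [bits]
  ring


lemma main_ineq (T : GTree E (fun _ => B3) (fun _ => B3)) :
    ∀ rem : Finset E, T.complete rem → ∀ U V W : Set (E → Bool),
      UpwardClosed U → UpwardClosed V → UpwardClosed W →
      Val (T.mass massR₁ massR₂) (F U V W) ≤ Val (pM m1v rem) (F U V W) ∧
        Val (pM m2v rem) (F U V W) ≤ Val (T.mass massR₁ massR₂) (F U V W) := by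
  induction T with
  | leaf =>
      intro rem hT U V W _ _ _
      have hrem : rem = ∅ := hT
      subst hrem
      have h1 : Val (pM m1v (∅ : Finset E)) (F U V W)
          = Val (GTree.leaf.mass massR₁ massR₂) (F U V W) :=
        Finset.sum_congr rfl fun C _ => by simp [pM, GTree.mass]
      have h2 : Val (pM m2v (∅ : Finset E)) (F U V W)
          = Val (GTree.leaf.mass massR₁ massR₂) (F U V W) :=
        Finset.sum_congr rfl fun C _ => by simp [pM, GTree.mass]
      exact ⟨le_of_eq h1.symm, le_of_eq h2⟩
  | node1 e child ih =>
      intro rem hT U V W hU hV hW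
      obtain ⟨he, hch⟩ := hT
      have hen : e ∉ rem.erase e := Finset.notMem_erase e rem
      have hind : ∀ (x : B3) (C : E → B3 ⊕ B3) (v : B3 ⊕ B3),
          (child x).mass massR₁ massR₂ (Function.update C e v)
            = (child x).mass massR₁ massR₂ C :=
        fun x C v => gmass_update (child x) (rem.erase e) (hch x) e hen C v
      have hA := val_node1_step e child hind U V W
      have h1 := val_pM_step m1v he U V W
      have h2 := val_pM_step m2v he U V W
      rw [Fintype.sum_sum_type] at h1 h2
      simp only [m1v, m2v, bits, zero_mul, Finset.sum_const_zero, add_zero, zero_add] at h1 h2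
      have hIH : ∀ x : B3,
          Val ((child x).mass massR₁ massR₂)
              (F (Upd U e x.1) (Upd V e x.2.1) (Upd W e x.2.2))
            ≤ Val (pM m1v (rem.erase e))
              (F (Upd U e x.1) (Upd V e x.2.1) (Upd W e x.2.2)) ∧
          Val (pM m2v (rem.erase e))
              (F (Upd U e x.1) (Upd V e x.2.1) (Upd W e x.2.2))
            ≤ Val ((child x).mass massR₁ massR₂)
              (F (Upd U e x.1) (Upd V e x.2.1) (Upd W e x.2.2)) :=
        fun x => ih x (rem.erase e) (hch x) _ _ _
          (Upd_upwardClosed hU e x.1) (Upd_upwardClosed hV e x.2.1)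
          (Upd_upwardClosed hW e x.2.2)
      constructor
      · have hle : (∑ x : B3, r₁ x * Val ((child x).mass massR₁ massR₂)
              (F (Upd U e x.1) (Upd V e x.2.1) (Upd W e x.2.2)))
            ≤ ∑ x : B3, r₁ x * Val (pM m1v (rem.erase e))
              (F (Upd U e x.1) (Upd V e x.2.1) (Upd W e x.2.2)) :=
          Finset.sum_le_sum fun x _ =>
            mul_le_mul_of_nonneg_left (hIH x).1 (r₁_nonneg x)
        linarith
      · have hM : ∀ C, 0 ≤ pM m2v (rem.erase e) C :=
          pM_nonneg m2v m2v_nonneg (rem.erase e)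
        have hcrux : (∑ x : B3, r₂ x * Val (pM m2v (rem.erase e))
              (F (Upd U e x.1) (Upd V e x.2.1) (Upd W e x.2.2)))
            ≤ ∑ x : B3, r₁ x * Val (pM m2v (rem.erase e))
              (F (Upd U e x.1) (Upd V e x.2.1) (Upd W e x.2.2)) :=
          crux _ (val_pair _ hM hU hV hW e true false false)
            (val_pair _ hM hU hV hW e false true false)
            (val_pair _ hM hU hV hW e false false true)
        have hle : (∑ x : B3, r₁ x * Val (pM m2v (rem.erase e))
              (F (Upd U e x.1) (Upd V e x.2.1) (Upd W e x.2.2)))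
            ≤ ∑ x : B3, r₁ x * Val ((child x).mass massR₁ massR₂)
              (F (Upd U e x.1) (Upd V e x.2.1) (Upd W e x.2.2)) :=
          Finset.sum_le_sum fun x _ =>
            mul_le_mul_of_nonneg_left (hIH x).2 (r₁_nonneg x)
        linarith
  | node2 e child ih =>
      intro rem hT U V W hU hV hW
      obtain ⟨he, hch⟩ := hT
      have hen : e ∉ rem.erase e := Finset.notMem_erase e rem
      have hind : ∀ (x : B3) (C : E → B3 ⊕ B3) (v : B3 ⊕ B3),
          (child x).mass massR₁ massR₂ (Function.update C e v)
            = (child x).mass massR₁ massR₂ C :=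
        fun x C v => gmass_update (child x) (rem.erase e) (hch x) e hen C v
      have hA := val_node2_step e child hind U V W
      have h1 := val_pM_step m1v he U V W
      have h2 := val_pM_step m2v he U V W
      rw [Fintype.sum_sum_type] at h1 h2
      simp only [m1v, m2v, bits, zero_mul, Finset.sum_const_zero, add_zero, zero_add] at h1 h2
      have hIH : ∀ x : B3,
          Val ((child x).mass massR₁ massR₂)
              (F (Upd U e x.1) (Upd V e x.2.1) (Upd W e x.2.2))
            ≤ Val (pM m1v (rem.erase e))
              (F (Upd U e x.1) (Upd V e x.2.1) (Upd W e x.2.2)) ∧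
          Val (pM m2v (rem.erase e))
              (F (Upd U e x.1) (Upd V e x.2.1) (Upd W e x.2.2))
            ≤ Val ((child x).mass massR₁ massR₂)
              (F (Upd U e x.1) (Upd V e x.2.1) (Upd W e x.2.2)) :=
        fun x => ih x (rem.erase e) (hch x) _ _ _
          (Upd_upwardClosed hU e x.1) (Upd_upwardClosed hV e x.2.1)
          (Upd_upwardClosed hW e x.2.2)
      constructor
      · have hM : ∀ C, 0 ≤ pM m1v (rem.erase e) C :=
          pM_nonneg m1v m1v_nonneg (rem.erase e)
        have hcrux : (∑ x : B3, r₂ x * Val (pM m1v (rem.erase e))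
              (F (Upd U e x.1) (Upd V e x.2.1) (Upd W e x.2.2)))
            ≤ ∑ x : B3, r₁ x * Val (pM m1v (rem.erase e))
              (F (Upd U e x.1) (Upd V e x.2.1) (Upd W e x.2.2)) :=
          crux _ (val_pair _ hM hU hV hW e true false false)
            (val_pair _ hM hU hV hW e false true false)
            (val_pair _ hM hU hV hW e false false true)
        have hle : (∑ x : B3, r₂ x * Val ((child x).mass massR₁ massR₂)
              (F (Upd U e x.1) (Upd V e x.2.1) (Upd W e x.2.2)))
            ≤ ∑ x : B3, r₂ x * Val (pM m1v (rem.erase e))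
              (F (Upd U e x.1) (Upd V e x.2.1) (Upd W e x.2.2)) :=
          Finset.sum_le_sum fun x _ =>
            mul_le_mul_of_nonneg_left (hIH x).1 (r₂_nonneg x)
        linarith
      · have hle : (∑ x : B3, r₂ x * Val (pM m2v (rem.erase e))
              (F (Upd U e x.1) (Upd V e x.2.1) (Upd W e x.2.2)))
            ≤ ∑ x : B3, r₂ x * Val ((child x).mass massR₁ massR₂)
              (F (Upd U e x.1) (Upd V e x.2.1) (Upd W e x.2.2)) :=
          Finset.sum_le_sum fun x _ =>
            mul_le_mul_of_nonneg_left (hIH x).2 (r₂_nonneg x)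
        linarith

lemma PrOf_eq (M : (E → B3 ⊕ B3) → ℝ) (U V W : Set (E → Bool)) :
    PrOf M (CoordEvent₃ U V W) = Val M (F U V W) := by
  classical
  unfold PrOf Val
  refine Finset.sum_congr rfl fun C _ => ?_
  by_cases h1 : (fun e => (bits (C e)).1) ∈ U <;>
  by_cases h2 : (fun e => (bits (C e)).2.1) ∈ V <;>
  by_cases h3 : (fun e => (bits (C e)).2.2) ∈ W <;>
    simp [Set.indicator_apply, CoordEvent₃, F, ind, h1, h2, h3]

lemma mass1_eq : mass1 (massR₁ (E := E)) = pM m1v Finset.univ := by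
  funext C
  unfold mass1 pM
  refine Finset.prod_congr rfl fun e _ => ?_
  cases h : C e with
  | inl x => rfl
  | inr x => rfl

lemma mass2_eq : mass2 (massR₂ (E := E)) = pM m2v Finset.univ := by
  funext C
  unfold mass2 pM
  refine Finset.prod_congr rfl fun e _ => ?_
  cases h : C e with
  | inl x => rfl
  | inr x => rfl


/-- Richards-type decision tree inequality:
`P(C₁ ∈ U×V×W) ≥ P(C ∈ U×V×W) ≥ P(C₂ ∈ U×V×W)`. -/
theorem richards_inequality
    (U V W : Set (E → Bool))
    (hU : UpwardClosed U) (hV : UpwardClosed V) (hW : UpwardClosed W)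
    (T : GTree E (fun _ => B3) (fun _ => B3)) (hT : T.complete Finset.univ) :
    PrOf (mass1 (massR₁ (E := E))) (CoordEvent₃ U V W)
        ≥ PrOf (T.mass massR₁ massR₂) (CoordEvent₃ U V W) ∧
      PrOf (T.mass massR₁ massR₂) (CoordEvent₃ U V W)
        ≥ PrOf (mass2 (massR₂ (E := E))) (CoordEvent₃ U V W) := by
  have hm := main_ineq T Finset.univ hT U V W hU hV hW
  have e1 : PrOf (mass1 (massR₁ (E := E))) (CoordEvent₃ U V W)
      = Val (pM m1v Finset.univ) (F U V W) := by
    rw [mass1_eq, PrOf_eq]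
  have e2 : PrOf (T.mass massR₁ massR₂) (CoordEvent₃ U V W)
      = Val (T.mass massR₁ massR₂) (F U V W) := PrOf_eq _ U V W
  have e3 : PrOf (mass2 (massR₂ (E := E))) (CoordEvent₃ U V W)
      = Val (pM m2v Finset.univ) (F U V W) := by
    rw [mass2_eq, PrOf_eq]
  constructor
  · rw [ge_iff_le, e1, e2]; exact hm.1
  · rw [ge_iff_le, e2, e3]; exact hm.2

end GenDT
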